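/- Let R be a commutative ring, I an ideal, M an arbitrary R-module, and F a flat R-module with F ⊗_R R/I = 0. Then Ext^i_R(F, \hat{M}^I) = 0 for all i ≥ 0, where \hat{M}^I = lim_α M/I^α M is the I-adic completion of M. -/

import Mathlib

open CategoryTheory TensorProduct

universe u




section Purity

variable {R : Type u} [CommRing R]

theorem lTensor_injective_of_rTensor_injective
    {A B Q : Type u} [AddCommGroup A] [Module R A] [AddCommGroup B] [Module R B]
    [AddCommGroup Q] [Module R Q] (f : A →ₗ[R] B)
    (h : Function.Injective (LinearMap.rTensor Q f)) :
    Function.Injective (LinearMap.lTensor Q f) := by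
  have key : (TensorProduct.comm R Q B).toLinearMap ∘ₗ LinearMap.lTensor Q f
      = LinearMap.rTensor Q f ∘ₗ (TensorProduct.comm R Q A).toLinearMap := by
    apply TensorProduct.ext'
    intro x y
    rfl
  intro a b hab
  apply (TensorProduct.comm R Q A).injective
  apply h
  have h1 := LinearMap.congr_fun key a
  have h2 := LinearMap.congr_fun key b
  simp only [LinearMap.comp_apply] at h1 h2
  show (LinearMap.rTensor Q f) ((TensorProduct.comm R Q A).toLinearMap a)
    = (LinearMap.rTensor Q f) ((TensorProduct.comm R Q A).toLinearMap b)
  rw [← h1, ← h2, hab]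

variable {A B C : Type u} [AddCommGroup A] [Module R A] [AddCommGroup B] [Module R B]
  [AddCommGroup C] [Module R C]

/-- If `0 → A → B → C → 0` is exact with `C` flat, then `A ⊗ N → B ⊗ N` is injective
for every `N` (the sequence is pure). -/
theorem purity [Module.Flat R C] (f : A →ₗ[R] B) (g : B →ₗ[R] C)
    (hf : Function.Injective f) (hfg : Function.Exact f g) (hg : Function.Surjective g)
    (N : Type u) [AddCommGroup N] [Module R N] :
    Function.Injective (LinearMap.rTensor N f) := by
  classical
  -- free presentation of N
  let p : (N →₀ R) →ₗ[R] N := Finsupp.linearCombination R _root_.id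
  have hp : Function.Surjective p := Finsupp.linearCombination_surjective R Function.surjective_id
  have hιp : Function.Exact (LinearMap.ker p).subtype p := p.exact_subtype_ker_map
  rw [injective_iff_map_eq_zero]
  intro t ht
  obtain ⟨x, rfl⟩ := LinearMap.lTensor_surjective A hp t
  -- x : A ⊗ G
  have hxB : (LinearMap.lTensor B p) (LinearMap.rTensor (N →₀ R) f x) = 0 := by
    have h1 := LinearMap.congr_fun (LinearMap.lTensor_comp_rTensor (f := f) (g := p)) x
    have h2 := LinearMap.congr_fun (LinearMap.rTensor_comp_lTensor (f := f) (g := p)) x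
    simp only [LinearMap.comp_apply] at h1 h2
    rw [h1, ← h2, ht]
  obtain ⟨ℓB, hℓB⟩ := (lTensor_exact (R := R) (M := ↥(LinearMap.ker p)) (N := (N →₀ R)) (P := N) (f := (LinearMap.ker p).subtype) (g := p) B hιp hp
    (LinearMap.rTensor (N →₀ R) f x)).mp hxB
  -- ℓB : B ⊗ L
  have hgf : g ∘ₗ f = 0 := hfg.linearMap_comp_eq_zero
  have hℓC : LinearMap.lTensor C (LinearMap.ker p).subtype
      (LinearMap.rTensor (LinearMap.ker p) g ℓB) = 0 := by
    have h1 := LinearMap.congr_fun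
      (LinearMap.lTensor_comp_rTensor (f := g) (g := (LinearMap.ker p).subtype)) ℓB
    have h2 := LinearMap.congr_fun
      (LinearMap.rTensor_comp_lTensor (f := g) (g := (LinearMap.ker p).subtype)) ℓB
    simp only [LinearMap.comp_apply] at h1 h2
    rw [h1.trans h2.symm, hℓB]
    have h3 := LinearMap.congr_fun (LinearMap.rTensor_comp (N →₀ R) (g := g) (f := f)) x
    rw [LinearMap.comp_apply] at h3
    rw [← h3, hgf, LinearMap.rTensor_zero, LinearMap.zero_apply]
  have hιinj : Function.Injective (LinearMap.lTensor C (LinearMap.ker p).subtype) :=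
    Module.Flat.lTensor_preserves_injective_linearMap _
      (Submodule.injective_subtype (LinearMap.ker p))
  have hz : LinearMap.rTensor (LinearMap.ker p) g ℓB = 0 := by
    apply hιinj
    rw [hℓC, map_zero]
  obtain ⟨ℓA, hℓA⟩ := (rTensor_exact (f := f) (g := g) (LinearMap.ker p) hfg hg ℓB).mp hz
  -- ℓA : A ⊗ L
  have key : LinearMap.rTensor (N →₀ R) f
      (x - LinearMap.lTensor A (LinearMap.ker p).subtype ℓA) = 0 := by
    rw [map_sub]
    have h1 := LinearMap.congr_fun
      (LinearMap.lTensor_comp_rTensor (f := f) (g := (LinearMap.ker p).subtype)) ℓA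
    have h2 := LinearMap.congr_fun
      (LinearMap.rTensor_comp_lTensor (f := f) (g := (LinearMap.ker p).subtype)) ℓA
    simp only [LinearMap.comp_apply] at h1 h2
    rw [h2.trans h1.symm, hℓA, hℓB, sub_self]
  have hx : x = LinearMap.lTensor A (LinearMap.ker p).subtype ℓA := by
    have hinj := Module.Flat.rTensor_preserves_injective_linearMap (M := (N →₀ R)) f hf
    have h0 : LinearMap.rTensor (N →₀ R) f
        (x - LinearMap.lTensor A (LinearMap.ker p).subtype ℓA) =
        LinearMap.rTensor (N →₀ R) f 0 := by rw [key, map_zero]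
    exact sub_eq_zero.mp (hinj h0)
  rw [hx]
  have hcomp := LinearMap.congr_fun
    (LinearMap.lTensor_comp A p (LinearMap.ker p).subtype).symm ℓA
  rw [LinearMap.comp_apply] at hcomp
  rw [hcomp]
  have hpι : p ∘ₗ (LinearMap.ker p).subtype = 0 := by
    ext y
    exact y.2
  rw [hpι, LinearMap.lTensor_zero, LinearMap.zero_apply]

/-- Two-out-of-three for flatness: kernel of a surjection between flat modules is flat. -/
theorem flat_of_exact [Module.Flat R B] [Module.Flat R C] (f : A →ₗ[R] B) (g : B →ₗ[R] C)
    (hf : Function.Injective f) (hfg : Function.Exact f g) (hg : Function.Surjective g) :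
    Module.Flat R A := by
  rw [Module.Flat.iff_rTensor_injective']
  intro J
  have h1 : Function.Injective (LinearMap.lTensor (↥J) f) :=
    lTensor_injective_of_rTensor_injective f (purity f g hf hfg hg (↥J))
  have h2 : Function.Injective (LinearMap.rTensor B J.subtype) :=
    Module.Flat.iff_rTensor_injective'.mp (inferInstance : Module.Flat R B) J
  have hcomm : LinearMap.rTensor B J.subtype ∘ₗ LinearMap.lTensor (↥J) f
      = LinearMap.lTensor R f ∘ₗ LinearMap.rTensor A J.subtype := by
    rw [LinearMap.rTensor_comp_lTensor, LinearMap.lTensor_comp_rTensor]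
  intro a b hab
  have : (LinearMap.rTensor B J.subtype ∘ₗ LinearMap.lTensor (↥J) f) a
      = (LinearMap.rTensor B J.subtype ∘ₗ LinearMap.lTensor (↥J) f) b := by
    rw [hcomm]
    simp only [LinearMap.comp_apply, hab]
  exact h1 (h2 this)

end Purity


section Hat
variable {R : Type u} [CommRing R] (J : Ideal R)
variable {N : Type u} [AddCommGroup N] [Module R N]

/-- A linear map `g : W → N` with `J • N = 0` induces a map `W ⊗ R/J → N`. -/
noncomputable def hatMap (hN : ∀ r ∈ J, ∀ y : N, r • y = 0)
    {W : Type u} [AddCommGroup W] [Module R W] (g : W →ₗ[R] N) :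
    (W ⊗[R] (R ⧸ J)) →ₗ[R] N :=
  TensorProduct.lift
    { toFun := fun p => Submodule.liftQ J (LinearMap.toSpanSingleton R N (g p))
        (fun r hr => by
          simp only [LinearMap.mem_ker, LinearMap.toSpanSingleton_apply]
          exact hN r hr (g p))
      map_add' := fun p q => by
        apply Submodule.linearMap_qext
        refine LinearMap.ext fun r => ?_
        simp only [LinearMap.comp_apply, Submodule.mkQ_apply, Submodule.liftQ_apply,
          LinearMap.toSpanSingleton_apply, LinearMap.add_apply]
        rw [map_add, smul_add]
      map_smul' := fun c p => by
        apply Submodule.linearMap_qext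
        refine LinearMap.ext fun r => ?_
        simp only [LinearMap.comp_apply, Submodule.mkQ_apply, Submodule.liftQ_apply,
          LinearMap.toSpanSingleton_apply, RingHom.id_apply, LinearMap.smul_apply]
        rw [map_smul, smul_comm] }

variable (hN : ∀ r ∈ J, ∀ y : N, r • y = 0)
variable {W V : Type u} [AddCommGroup W] [Module R W] [AddCommGroup V] [Module R V]

lemma hatMap_tmul (g : W →ₗ[R] N) (w : W) (r : R) :
    hatMap J hN g (w ⊗ₜ Submodule.Quotient.mk r) = r • g w := rfl

lemma hatMap_tmul_one (g : W →ₗ[R] N) (w : W) :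
    hatMap J hN g (w ⊗ₜ Submodule.Quotient.mk 1) = g w := by
  rw [hatMap_tmul, one_smul]

lemma hatMap_rTensor (g : W →ₗ[R] N) (u : V →ₗ[R] W) :
    (hatMap J hN g) ∘ₗ (LinearMap.rTensor (R ⧸ J) u) = hatMap J hN (g ∘ₗ u) := by
  apply TensorProduct.ext'
  intro v s
  obtain ⟨r, rfl⟩ := Submodule.Quotient.mk_surjective J s
  simp only [LinearMap.comp_apply, LinearMap.rTensor_tmul]
  rfl

lemma hatMap_zero : hatMap J hN (0 : W →ₗ[R] N) = 0 := by
  apply TensorProduct.ext'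
  intro v s
  obtain ⟨r, rfl⟩ := Submodule.Quotient.mk_surjective J s
  exact (hatMap_tmul J hN 0 v r).trans (by simp)

end Hat

section Lift
variable {R : Type u} [CommRing R]

lemma lift_along {P V W : Type u} [AddCommGroup P] [Module R P] [AddCommGroup V] [Module R V]
    [AddCommGroup W] [Module R W] (hP : Module.Projective R P)
    (u : P →ₗ[R] V) (v : W →ₗ[R] V) (h : ∀ x, u x ∈ LinearMap.range v) :
    ∃ w : P →ₗ[R] W, v ∘ₗ w = u := by
  obtain ⟨w, hw⟩ := Module.projective_lifting_property v.rangeRestrict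
    (u.codRestrict (LinearMap.range v) h) (LinearMap.surjective_rangeRestrict v)
  refine ⟨w, ?_⟩
  ext x
  have := LinearMap.congr_fun hw x
  have h2 := congrArg Subtype.val this
  simpa using h2

end Lift

noncomputable section Core

variable {R : Type u} [CommRing R]
variable {F : Type u} [AddCommGroup F] [Module R F] [Module.Flat R F]
variable {P : ℕ → Type u} [∀ n, AddCommGroup (P n)] [∀ n, Module R (P n)]
variable (d : ∀ n, P (n+1) →ₗ[R] P n) (π : P 0 →ₗ[R] F)
variable (J : Ideal R)

set_option linter.unusedSectionVars false

/-- The canonical map `V → V ⊗ R/J`. -/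
def tauGen (V : Type u) [AddCommGroup V] [Module R V] : V →ₗ[R] (V ⊗[R] (R ⧸ J)) :=
  (TensorProduct.mk R V (R ⧸ J)).flip (Submodule.Quotient.mk 1)

lemma tauGen_apply (V : Type u) [AddCommGroup V] [Module R V] (x : V) :
    tauGen J V x = x ⊗ₜ Submodule.Quotient.mk 1 := rfl

lemma tauGen_natural {V W : Type u} [AddCommGroup V] [Module R V] [AddCommGroup W] [Module R W]
    (u : V →ₗ[R] W) (x : V) :
    LinearMap.rTensor (R ⧸ J) u (tauGen J V x) = tauGen J W (u x) := by
  simp [tauGen_apply, LinearMap.rTensor_tmul]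

section Res

variable (hproj : ∀ n, Module.Projective R (P n))
variable (hex : ∀ n, Function.Exact (d (n+1)) (d n)) (hex0 : Function.Exact (d 0) π)
variable (hπ : Function.Surjective π)
variable (hJF : (J • ⊤ : Submodule R F) = ⊤)

include hproj hex hex0 hπ

lemma flat_ker : ∀ n, Module.Flat R ↥(LinearMap.range (d n)) := by
  intro n
  induction n with
  | zero =>
    have hker : LinearMap.ker π = LinearMap.range (d 0) := LinearMap.exact_iff.mp hex0
    haveI := hproj 0
    exact flat_of_exact (LinearMap.range (d 0)).subtype π (Submodule.injective_subtype _)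
      (hker ▸ π.exact_subtype_ker_map) hπ
  | succ n ih =>
    haveI := hproj (n+1)
    haveI := ih
    have hker : LinearMap.ker ((d n).rangeRestrict) = LinearMap.range (d (n+1)) := by
      rw [LinearMap.ker_rangeRestrict]
      exact LinearMap.exact_iff.mp (hex n)
    exact flat_of_exact (LinearMap.range (d (n+1))).subtype (d n).rangeRestrict
      (Submodule.injective_subtype _) (hker ▸ LinearMap.exact_subtype_ker_map _)
      (LinearMap.surjective_rangeRestrict _)

lemma rTensor_subtype_injective :
    ∀ n, Function.Injective (LinearMap.rTensor (R ⧸ J) (LinearMap.range (d n)).subtype) := by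
  intro n
  cases n with
  | zero =>
    have hker : LinearMap.ker π = LinearMap.range (d 0) := LinearMap.exact_iff.mp hex0
    exact purity (LinearMap.range (d 0)).subtype π (Submodule.injective_subtype _)
      (hker ▸ π.exact_subtype_ker_map) hπ (R ⧸ J)
  | succ n =>
    haveI := flat_ker d π hproj hex hex0 hπ n
    have hker : LinearMap.ker ((d n).rangeRestrict) = LinearMap.range (d (n+1)) := by
      rw [LinearMap.ker_rangeRestrict]
      exact LinearMap.exact_iff.mp (hex n)
    exact purity (LinearMap.range (d (n+1))).subtype (d n).rangeRestrict
      (Submodule.injective_subtype _) (hker ▸ LinearMap.exact_subtype_ker_map _)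
      (LinearMap.surjective_rangeRestrict _) (R ⧸ J)

include hJF

lemma Qsurj : Function.Surjective (LinearMap.rTensor (R ⧸ J) (d 0)) := by
  have hFS : Subsingleton (F ⊗[R] (R ⧸ J)) := by
    have := Submodule.Quotient.subsingleton_iff.mpr hJF
    exact (TensorProduct.tensorQuotEquivQuotSMul F J).toEquiv.subsingleton
  intro q
  exact (rTensor_exact (f := d 0) (g := π) (R ⧸ J) hex0 hπ q).mp (Subsingleton.elim _ _)

-- exactness of the tensored complex in the form we need
lemma Qexact (n : ℕ) (q : P (n+1) ⊗[R] (R ⧸ J))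
    (hq : LinearMap.rTensor (R ⧸ J) (d n) q = 0) :
    q ∈ LinearMap.range (LinearMap.rTensor (R ⧸ J) (d (n+1))) := by
  have hfac : d n = (LinearMap.range (d n)).subtype ∘ₗ (d n).rangeRestrict := by ext x; rfl
  have h1 : LinearMap.rTensor (R ⧸ J) ((d n).rangeRestrict) q = 0 := by
    apply rTensor_subtype_injective d π J hproj hex hex0 hπ n
    rw [map_zero]
    have := LinearMap.congr_fun
      (LinearMap.rTensor_comp (R ⧸ J) (g := (LinearMap.range (d n)).subtype)
        (f := (d n).rangeRestrict)).symm q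
    rw [LinearMap.comp_apply] at this
    rw [this, ← hfac, hq]
  have hexact : Function.Exact (d (n+1)) ((d n).rangeRestrict) := by
    rw [LinearMap.exact_iff, LinearMap.ker_rangeRestrict]
    exact LinearMap.exact_iff.mp (hex n)
  exact (rTensor_exact (f := d (n+1)) (g := (d n).rangeRestrict) (R ⧸ J) hexact
    (LinearMap.surjective_rangeRestrict _) q).mp h1

/-- base contraction -/
lemma sigma0 : ∃ s : P 0 →ₗ[R] (P 1 ⊗[R] (R ⧸ J)),
    (LinearMap.rTensor (R ⧸ J) (d 0)) ∘ₗ s = tauGen J (P 0) := by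
  apply lift_along (hproj 0)
  intro x
  exact Qsurj d π J hproj hex hex0 hπ hJF (tauGen J (P 0) x)

lemma sigmaChain : ∀ n, ∃ (s : P n →ₗ[R] (P (n+1) ⊗[R] (R ⧸ J)))
    (t : P (n+1) →ₗ[R] (P (n+2) ⊗[R] (R ⧸ J))),
    (LinearMap.rTensor (R ⧸ J) (d (n+1))) ∘ₗ t = tauGen J (P (n+1)) - s ∘ₗ d n := by
  intro n
  induction n with
  | zero =>
    obtain ⟨s, hs⟩ := sigma0 d π J hproj hex hex0 hπ hJF
    refine ⟨s, ?_⟩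
    apply lift_along (hproj 1)
    intro x
    apply Qexact d π J hproj hex hex0 hπ hJF 0
    simp only [LinearMap.sub_apply, LinearMap.comp_apply, map_sub]
    rw [tauGen_natural]
    have h := LinearMap.congr_fun hs (d 0 x)
    rw [LinearMap.comp_apply] at h
    rw [h, sub_self]
  | succ n ih =>
    obtain ⟨s, t, hst⟩ := ih
    refine ⟨t, ?_⟩
    apply lift_along (hproj (n+2))
    intro x
    apply Qexact d π J hproj hex hex0 hπ hJF (n+1)
    simp only [LinearMap.sub_apply, LinearMap.comp_apply, map_sub]
    rw [tauGen_natural]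
    have h1 := LinearMap.congr_fun hst (d (n+1) x)
    rw [LinearMap.comp_apply] at h1
    rw [h1]
    have hdd : d n (d (n+1) x) = 0 := by
      have h2 := LinearMap.exact_iff.mp (hex n)
      have hmem : d (n+1) x ∈ LinearMap.range (d (n+1)) := ⟨x, rfl⟩
      rw [← h2] at hmem
      exact hmem
    simp only [LinearMap.sub_apply, LinearMap.comp_apply, hdd, map_zero, sub_zero, sub_self]

variable {N : Type u} [AddCommGroup N] [Module R N]

lemma L4a (hN : ∀ r ∈ J, ∀ y : N, r • y = 0) (g : P 0 →ₗ[R] N) (hg : g ∘ₗ d 0 = 0) :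
    g = 0 := by
  obtain ⟨s, hs⟩ := sigma0 d π J hproj hex hex0 hπ hJF
  ext x
  show g x = 0
  have h2 := LinearMap.congr_fun (hatMap_rTensor J hN g (d 0)) (s x)
  rw [LinearMap.comp_apply] at h2
  have e1 : LinearMap.rTensor (R ⧸ J) (d 0) (s x) = tauGen J (P 0) x := by
    have h := LinearMap.congr_fun hs x
    rw [LinearMap.comp_apply] at h
    exact h
  calc g x = hatMap J hN g (x ⊗ₜ Submodule.Quotient.mk 1) := (hatMap_tmul_one J hN g x).symm
    _ = hatMap J hN g (tauGen J (P 0) x) := rfl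
    _ = hatMap J hN g (LinearMap.rTensor (R ⧸ J) (d 0) (s x)) := by rw [e1]
    _ = hatMap J hN (g ∘ₗ d 0) (s x) := h2
    _ = hatMap J hN (0 : P 1 →ₗ[R] N) (s x) := by rw [hg]
    _ = 0 := by rw [hatMap_zero]; rfl

lemma L4b (hN : ∀ r ∈ J, ∀ y : N, r • y = 0) (n : ℕ) (g : P (n+1) →ₗ[R] N)
    (hg : g ∘ₗ d (n+1) = 0) :
    ∃ h : P n →ₗ[R] N, g = h ∘ₗ d n := by
  obtain ⟨s, t, hst⟩ := sigmaChain d π J hproj hex hex0 hπ hJF n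
  refine ⟨hatMap J hN g ∘ₗ s, ?_⟩
  ext x
  simp only [LinearMap.comp_apply]
  have h2 := LinearMap.congr_fun hst x
  simp only [LinearMap.comp_apply, LinearMap.sub_apply] at h2
  have h3 : tauGen J (P (n+1)) x
      = LinearMap.rTensor (R ⧸ J) (d (n+1)) (t x) + s (d n x) := by
    rw [h2]; abel
  have h4 := LinearMap.congr_fun (hatMap_rTensor J hN g (d (n+1))) (t x)
  rw [LinearMap.comp_apply] at h4
  have e3 : hatMap J hN g (LinearMap.rTensor (R ⧸ J) (d (n+1)) (t x)) = 0 := by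
    rw [h4, hg, hatMap_zero]; rfl
  calc g x = hatMap J hN g (x ⊗ₜ Submodule.Quotient.mk 1) := (hatMap_tmul_one J hN g x).symm
    _ = hatMap J hN g (tauGen J (P (n+1)) x) := rfl
    _ = hatMap J hN g (LinearMap.rTensor (R ⧸ J) (d (n+1)) (t x) + s (d n x)) := by rw [← h3]
    _ = hatMap J hN g (LinearMap.rTensor (R ⧸ J) (d (n+1)) (t x))
        + hatMap J hN g (s (d n x)) := by rw [map_add]
    _ = hatMap J hN g (s (d n x)) := by rw [e3, zero_add]

end Res
end Core

section Tower

variable {R : Type u} [CommRing R] (I : Ideal R)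
variable {M : Type u} [AddCommGroup M] [Module R M]
variable {U V W E : Type u} [AddCommGroup U] [Module R U] [AddCommGroup V] [Module R V]
  [AddCommGroup W] [Module R W] [AddCommGroup E] [Module R E]
variable (du : U →ₗ[R] V) (dv : V →ₗ[R] W) (e : W →ₗ[R] E)

lemma transitionMap_surjective {m n : ℕ} (h : m ≤ n) :
    Function.Surjective (AdicCompletion.transitionMap I M h) := by
  intro x
  obtain ⟨y, rfl⟩ := Submodule.Quotient.mk_surjective _ x
  exact ⟨Submodule.Quotient.mk y, Submodule.factor_mk _ y⟩

lemma subsingleton_quot_zero : Subsingleton (M ⧸ (I ^ 0 • ⊤ : Submodule R M)) := by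
  rw [Submodule.Quotient.subsingleton_iff, pow_zero, Ideal.one_eq_top, Submodule.top_smul]

/-- The tower / lim¹ argument: lifting a cocycle with values in the adic completion
to a coboundary, given that we can do it compatibly at each finite stage. -/
theorem tower (hEproj : Module.Projective R E)
    (hed : e ∘ₗ dv = 0)
    (hsolveV : ∀ (α : ℕ) (g : V →ₗ[R] M ⧸ (I ^ α • ⊤ : Submodule R M)), g ∘ₗ du = 0 →
      ∃ h : W →ₗ[R] M ⧸ (I ^ α • ⊤ : Submodule R M), g = h ∘ₗ dv)
    (hsolveW : ∀ (α : ℕ) (z : W →ₗ[R] M ⧸ (I ^ α • ⊤ : Submodule R M)), z ∘ₗ dv = 0 →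
      ∃ w : E →ₗ[R] M ⧸ (I ^ α • ⊤ : Submodule R M), z = w ∘ₗ e)
    (G : V →ₗ[R] AdicCompletion I M) (hG : G ∘ₗ du = 0) :
    ∃ H : W →ₗ[R] AdicCompletion I M, G = H ∘ₗ dv := by
  classical
  set Gc : ∀ α : ℕ, V →ₗ[R] M ⧸ (I ^ α • ⊤ : Submodule R M) :=
    fun α => AdicCompletion.eval I M α ∘ₗ G with hGcdef
  have hGc : ∀ α, (Gc α) ∘ₗ du = 0 := by
    intro α
    rw [hGcdef, LinearMap.comp_assoc, hG, LinearMap.comp_zero]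
  -- the inductive step
  have step : ∀ (α : ℕ) (h : W →ₗ[R] M ⧸ (I ^ α • ⊤ : Submodule R M)), h ∘ₗ dv = Gc α →
      ∃ h' : W →ₗ[R] M ⧸ (I ^ (α+1) • ⊤ : Submodule R M), h' ∘ₗ dv = Gc (α+1) ∧
        AdicCompletion.transitionMap I M (Nat.le_succ α) ∘ₗ h' = h := by
    intro α h hh
    obtain ⟨h'', hh''⟩ := hsolveV (α+1) (Gc (α+1)) (hGc (α+1))
    set π1 := AdicCompletion.transitionMap I M (Nat.le_succ α) with hπ1
    have hπGc : π1 ∘ₗ Gc (α+1) = Gc α := by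
      rw [hGcdef, ← LinearMap.comp_assoc, hπ1, AdicCompletion.transitionMap_comp_eval]
    have hz : (π1 ∘ₗ h'' - h) ∘ₗ dv = 0 := by
      rw [LinearMap.sub_comp, LinearMap.comp_assoc, ← hh'', hπGc, hh, sub_self]
    obtain ⟨w, hw⟩ := hsolveW α (π1 ∘ₗ h'' - h) hz
    obtain ⟨w', hw'⟩ := lift_along hEproj w π1
      (fun x => (transitionMap_surjective I (Nat.le_succ α) (w x)).imp (fun _ hy => hy))
    refine ⟨h'' - w' ∘ₗ e, ?_, ?_⟩
    · rw [LinearMap.sub_comp, LinearMap.comp_assoc, hed, LinearMap.comp_zero, sub_zero, ← hh'']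
    · rw [LinearMap.comp_sub, ← LinearMap.comp_assoc, hw', ← hw]
      abel
  -- build the compatible family by recursion
  let fam : ∀ α : ℕ, {h : W →ₗ[R] M ⧸ (I ^ α • ⊤ : Submodule R M) // h ∘ₗ dv = Gc α} :=
    fun α => Nat.rec
      ⟨0, by
        haveI := subsingleton_quot_zero I (M := M)
        apply LinearMap.ext
        intro x
        exact Subsingleton.elim _ _⟩
      (fun α ih => ⟨(step α ih.1 ih.2).choose, (step α ih.1 ih.2).choose_spec.1⟩) α
  have hfam_succ : ∀ α, AdicCompletion.transitionMap I M (Nat.le_succ α) ∘ₗ (fam (α+1)).1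
      = (fam α).1 := fun α => (step α (fam α).1 (fam α).2).choose_spec.2
  have hcompat : ∀ {m n : ℕ} (hle : m ≤ n),
      AdicCompletion.transitionMap I M hle ∘ₗ (fam n).1 = (fam m).1 := by
    intro m n hle
    induction n, hle using Nat.le_induction with
    | base =>
      rw [show AdicCompletion.transitionMap I M (le_refl m) = LinearMap.id from
        Submodule.linearMap_qext _ ((Submodule.factor_comp_mk _).trans (LinearMap.id_comp _).symm),
        LinearMap.id_comp]
    | succ n hmn ih =>
      have hcmp := Submodule.factor_comp (M := M) (Submodule.pow_smul_top_le I M (Nat.le_succ n))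
        (Submodule.pow_smul_top_le I M hmn)
      calc AdicCompletion.transitionMap I M (Nat.le_succ_of_le hmn) ∘ₗ (fam (n+1)).1
          = (AdicCompletion.transitionMap I M hmn
              ∘ₗ AdicCompletion.transitionMap I M (Nat.le_succ n)) ∘ₗ (fam (n+1)).1 := by
            rw [hcmp]
        _ = AdicCompletion.transitionMap I M hmn
              ∘ₗ (AdicCompletion.transitionMap I M (Nat.le_succ n) ∘ₗ (fam (n+1)).1) := by
            rw [LinearMap.comp_assoc]
        _ = (fam m).1 := by rw [hfam_succ n, ih]
  refine ⟨AdicCompletion.lift I (fun α => (fam α).1) hcompat, ?_⟩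
  ext x α
  exact (LinearMap.congr_fun (fam α).2 x).symm

theorem tower0
    (hsolve0 : ∀ (α : ℕ) (g : V →ₗ[R] M ⧸ (I ^ α • ⊤ : Submodule R M)), g ∘ₗ du = 0 → g = 0)
    (G : V →ₗ[R] AdicCompletion I M) (hG : G ∘ₗ du = 0) : G = 0 := by
  ext x α
  have h0 : (AdicCompletion.eval I M α ∘ₗ G) = 0 := by
    apply hsolve0 α
    rw [LinearMap.comp_assoc, hG, LinearMap.comp_zero]
  have h1 := LinearMap.congr_fun h0 x
  rw [LinearMap.comp_apply] at h1
  exact h1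

end Tower

/-- The `i`-th Ext module `Ext^i_R(X, Y)` of two `R`-modules. -/
noncomputable def extMod (R : Type u) [CommRing R] (i : ℕ)
    (X Y : Type u) [AddCommGroup X] [Module R X] [AddCommGroup Y] [Module R Y] :
    ModuleCat.{u} R :=
  ((Ext R (ModuleCat.{u} R) i).obj (Opposite.op (ModuleCat.of R X))).obj (ModuleCat.of R Y)

section MainAux
variable {R : Type u} [CommRing R]

lemma pow_smul_top_eq (I : Ideal R) (F : Type u) [AddCommGroup F] [Module R F]
    (hF : Subsingleton (F ⊗[R] (R ⧸ I))) (α : ℕ) :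
    (I ^ α • ⊤ : Submodule R F) = ⊤ := by
  have h1 : (I • ⊤ : Submodule R F) = ⊤ := by
    rw [← Submodule.Quotient.subsingleton_iff]
    exact (TensorProduct.tensorQuotEquivQuotSMul F I).symm.toEquiv.subsingleton
  induction α with
  | zero => rw [pow_zero, Ideal.one_eq_top, Submodule.top_smul]
  | succ α ih => rw [pow_succ, mul_smul, h1, ih]

lemma quot_smul_annih (I : Ideal R) (M : Type u) [AddCommGroup M] [Module R M] (α : ℕ) :
    ∀ r ∈ I ^ α, ∀ y : M ⧸ (I ^ α • ⊤ : Submodule R M), r • y = 0 := by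
  intro r hr y
  obtain ⟨m, rfl⟩ := Submodule.Quotient.mk_surjective _ y
  rw [← Submodule.Quotient.mk_smul, Submodule.Quotient.mk_eq_zero]
  exact Submodule.smul_mem_smul hr Submodule.mem_top

end MainAux

/-- Let `R` be a commutative ring, `I` an ideal, `M` an arbitrary `R`-module, and `F` a flat
`R`-module with `F ⊗_R R/I = 0`. Then `Ext^i_R(F, \hat{M}^I) = 0` for all `i ≥ 0`, where
`\hat{M}^I = lim_α M/I^α M` is the `I`-adic completion of `M`. -/
theorem stmt13 (R : Type u) [CommRing R] (I : Ideal R)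
    (M : Type u) [AddCommGroup M] [Module R M]
    (F : Type u) [AddCommGroup F] [Module R F] [Module.Flat R F]
    (hF : Subsingleton (F ⊗[R] (R ⧸ I))) :
    ∀ i : ℕ, Subsingleton (extMod R i F (AdicCompletion I M)) := by
  intro i
  classical
  set X : ModuleCat.{u} R := ModuleCat.of R F with hX
  set Y : ModuleCat.{u} R := ModuleCat.of R (AdicCompletion I M) with hY
  obtain ⟨P⟩ : Nonempty (ProjectiveResolution X) := HasProjectiveResolution.out
  -- concrete data
  set d : ∀ n : ℕ, ↥(P.complex.X (n+1)) →ₗ[R] ↥(P.complex.X n) :=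
    fun n => (P.complex.d (n+1) n).hom with hd
  set pi : ↥(P.complex.X 0) →ₗ[R] F := (P.π.f 0).hom with hpi
  have hproj : ∀ n, Module.Projective R ↥(P.complex.X n) := by
    intro n
    rw [IsProjective.iff_projective]
    exact P.projective n
  have hpis : Function.Surjective pi := by
    exact (ModuleCat.epi_iff_surjective (P.π.f 0)).mp inferInstance
  have hex : ∀ n, Function.Exact (d (n+1)) (d n) := by
    intro n
    rw [LinearMap.exact_iff]
    have h1 := (P.complex.exactAt_iff' (n+2) (n+1) n (by simp [ChainComplex.prev])
      (by simp [ChainComplex.next_nat_succ])).mp (P.complex_exactAt_succ n)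
    have h2 := (ShortComplex.moduleCat_exact_iff_range_eq_ker _).mp h1
    exact h2.symm
  have hex0 : Function.Exact (d 0) pi := by
    rw [LinearMap.exact_iff]
    have h2 := (ShortComplex.moduleCat_exact_iff_range_eq_ker _).mp P.exact₀
    exact h2.symm
  -- exactness of the Hom complex
  have hJFa : ∀ α : ℕ, ((I ^ α : Ideal R) • ⊤ : Submodule R F) = ⊤ :=
    fun α => pow_smul_top_eq I F hF α
  have hNa : ∀ α : ℕ, ∀ r ∈ (I ^ α : Ideal R),
      ∀ y : M ⧸ ((I ^ α : Ideal R) • ⊤ : Submodule R M), r • y = 0 :=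
    fun α => quot_smul_annih I M α
  have hExact : (P.complex.linearYonedaObj R Y).ExactAt i := by
    obtain _ | n := i
    · rw [HomologicalComplex.exactAt_iff' _ 0 0 1 (by simp [CochainComplex.prev_nat_zero])
        (by simp [CochainComplex.next])]
      rw [ShortComplex.moduleCat_exact_iff]
      intro g hg
      refine ⟨0, ?_⟩
      have hg0 : g = 0 := ModuleCat.hom_ext <| tower0 I (d 0)
        (fun α z hz => L4a d pi (I ^ α) hproj hex hex0 hpis (hJFa α) (hNa α) z hz) g.hom
          (LinearMap.ext fun x => congrArg (fun f => ModuleCat.Hom.hom f x) hg)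
      simp only [map_zero]
      exact hg0.symm
    · rw [HomologicalComplex.exactAt_iff' _ n (n+1) (n+2) (by simp [CochainComplex.prev_nat_succ])
        (by simp [CochainComplex.next])]
      rw [ShortComplex.moduleCat_exact_iff]
      intro G hG
      have hsolveV : ∀ (α : ℕ) (g : ↥(P.complex.X (n+1)) →ₗ[R]
          M ⧸ ((I ^ α : Ideal R) • ⊤ : Submodule R M)), g ∘ₗ d (n+1) = 0 →
          ∃ h, g = h ∘ₗ d n :=
        fun α g hgc => L4b d pi (I ^ α) hproj hex hex0 hpis (hJFa α) (hNa α) n g hgc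
      obtain _ | k := n
      · -- n = 0 : use E = P 0 with e = 0
        obtain ⟨H, hH⟩ := tower I (d 1) (d 0) (0 : ↥(P.complex.X 0) →ₗ[R] ↥(P.complex.X 0))
          (hproj 0) (LinearMap.zero_comp _) hsolveV
          (fun α z hz => ⟨0, by
            rw [L4a d pi (I ^ α) hproj hex hex0 hpis (hJFa α) (hNa α) z hz,
              LinearMap.comp_zero]⟩) G.hom
          (LinearMap.ext fun x => congrArg (fun f => ModuleCat.Hom.hom f x) hG)
        exact ⟨ModuleCat.ofHom H, ModuleCat.hom_ext (LinearMap.ext fun x => (LinearMap.congr_fun hH x).symm)⟩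
      · -- n = k+1 : use E = P k with e = d k
        obtain ⟨H, hH⟩ := tower I (d (k+2)) (d (k+1)) (d k)
          (hproj k) ((hex k).linearMap_comp_eq_zero) hsolveV
          (fun α z hz => L4b d pi (I ^ α) hproj hex hex0 hpis (hJFa α) (hNa α) k z hz) G.hom
          (LinearMap.ext fun x => congrArg (fun f => ModuleCat.Hom.hom f x) hG)
        exact ⟨ModuleCat.ofHom H, ModuleCat.hom_ext (LinearMap.ext fun x => (LinearMap.congr_fun hH x).symm)⟩
  have hz : Limits.IsZero ((P.complex.linearYonedaObj R Y).homology i) := by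
    rw [← HomologicalComplex.exactAt_iff_isZero_homology]
    exact hExact
  have hzext : Limits.IsZero (extMod R i F (AdicCompletion I M)) :=
    hz.of_iso (P.isoExt i Y)
  have hid : 𝟙 (extMod R i F (AdicCompletion I M)) = 0 := Limits.IsZero.eq_of_src hzext _ _
  constructor
  intro a b
  calc a = ModuleCat.Hom.hom (𝟙 (extMod R i F (AdicCompletion I M))) a := rfl
    _ = ModuleCat.Hom.hom ((0 : extMod R i F (AdicCompletion I M) ⟶ _)) a := by rw [hid]
    _ = 0 := rfl
    _ = ModuleCat.Hom.hom ((0 : extMod R i F (AdicCompletion I M) ⟶ _)) b := rfl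
    _ = ModuleCat.Hom.hom (𝟙 (extMod R i F (AdicCompletion I M))) b := by rw [hid]
    _ = b := rfl
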